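/- Let R be a commutative ring in which 3 is invertible and let θ be a ring automorphism of R with θ(θ(θ(x))) = x for all x. Let z, r, r′, r″ ∈ R and suppose the element r·z + r′·θ(z) + r″·θ(θ(z)) is fixed by θ. Then there exists t ∈ R such that r·z + r′·θ(z) + r″·θ(θ(z)) = t·z + θ(t)·θ(z) + θ(θ(t))·θ(θ(z)). -/
import Mathlib


/-- Over a commutative ring `R` with `3` invertible and a ring automorphism `θ` of order
dividing 3, if `r*z + r'*θ(z) + r''*θ(θ(z))` is `θ`-fixed then it can be written as
`t*z + θ(t)*θ(z) + θ(θ(t))*θ(θ(z))` for some `t`. -/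
theorem stmt_7 {R : Type*} [CommRing R] (h3 : IsUnit (3 : R))
    (θ : R ≃+* R) (hθ : ∀ x, θ (θ (θ x)) = x)
    (z r r' r'' : R)
    (hfix : θ (r * z + r' * θ z + r'' * θ (θ z)) = r * z + r' * θ z + r'' * θ (θ z)) :
    ∃ t : R, r * z + r' * θ z + r'' * θ (θ z) = t * z + θ t * θ z + θ (θ t) * θ (θ z) := by
  obtain ⟨u, hu⟩ := h3.exists_right_inv
  have h3' : θ (3 : R) = 3 := by
    have : ((3 : ℕ) : R) = (3 : R) := by norm_num
    rw [← this, map_natCast]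
  have huθ : θ u = u := by
    have h1 : (3 : R) * θ u = 1 := by
      have := congrArg θ hu
      rwa [map_mul, map_one, h3'] at this
    calc θ u = (3 * u) * θ u := by rw [hu, one_mul]
      _ = u * (3 * θ u) := by ring
      _ = u := by rw [h1, mul_one]
  set S := r * z + r' * θ z + r'' * θ (θ z) with hS
  have hfix2 : θ (θ S) = S := by rw [hfix, hfix]
  refine ⟨u * (r + θ r'' + θ (θ r')), ?_⟩
  have ht1 : θ (u * (r + θ r'' + θ (θ r'))) = u * (θ r + θ (θ r'') + r') := by
    simp [map_mul, map_add, huθ, hθ]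
  have ht2 : θ (θ (u * (r + θ r'' + θ (θ r')))) = u * (θ (θ r) + r'' + θ r') := by
    rw [ht1]
    simp [map_mul, map_add, huθ, hθ]
  rw [ht2, ht1]
  have expand : θ S = θ r * θ z + θ r' * θ (θ z) + θ r'' * z := by
    simp [hS, map_add, map_mul, hθ]
  have expand2 : θ (θ S) = θ (θ r) * θ (θ z) + θ (θ r') * z + θ (θ r'') * θ z := by
    rw [expand]
    simp [map_add, map_mul, hθ]
  calc S = u * (3 * S) := by rw [← mul_assoc, mul_comm u 3, hu, one_mul]
    _ = u * (S + θ S + θ (θ S)) := by rw [hfix2, hfix]; ring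
    _ = _ := by rw [expand2, expand, hS]; ring
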